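/- For any set system 𝔐 ⊆ 2^S, the two-sided ideal I_q(𝔐) of the free algebra A = R⟨t_s | s ∈ S⟩ does not depend on the chosen total order of S: if I_q^<(𝔐) and I_q^≪(𝔐) denote the ideals defined using two total orders < and ≪ on S, then I_q^<(𝔐) = I_q^≪(𝔐). -/

import Mathlib

/-- The `<`-ordered monomial `t^<_J`, for an explicitly given total order. -/
noncomputable def tMonO (R : Type*) [CommRing R] {S : Type*} (lo : LinearOrder S)
    (J : Finset S) : FreeAlgebra R S :=
  letI := lo
  ((J.sort (· ≤ ·)).map (FreeAlgebra.ι R)).prod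

/-- `ℓ^<_J(I) = Σ_ν (α_ν - ν) = Σ_{i ∈ I} #{j ∈ J \ I : j < i}`, for an explicit order. -/
def ellJO {S : Type*} (lo : LinearOrder S) (J I : Finset S) : ℕ :=
  letI := lo
  ∑ i ∈ I, ((J \ I).filter (· < i)).card

/-- `τ^{-,<}_J`, for an explicitly given total order. -/
noncomputable def tauMinusO (R : Type*) [CommRing R] {S : Type*} (lo : LinearOrder S) (q : R)
    (J : Finset S) : FreeAlgebra R S :=
  ∑ I ∈ J.powerset.filter fun I => ¬ 2 ∣ I.card,
    ((-1 : R) ^ ellJO lo J I * (-q) ^ ((I.card - 1) / 2)) • tMonO R lo (J \ I)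

/-- even companion `σ_J` -/
noncomputable def sigO (R : Type*) [CommRing R] {S : Type*} (lo : LinearOrder S) (q : R)
    (J : Finset S) : FreeAlgebra R S :=
  ∑ I ∈ J.powerset.filter fun I => 2 ∣ I.card,
    ((-1 : R) ^ ellJO lo J I * (-q) ^ (I.card / 2)) • tMonO R lo (J \ I)

/-- the sorted list of `J` under `lo` -/
def sortL {S : Type*} (lo : LinearOrder S) (J : Finset S) : List S :=
  letI := lo
  J.sort (· ≤ ·)

/-- list-level recursive pair `(τ, σ)` -/
noncomputable def tsL (R : Type*) [CommRing R] {S : Type*} (q : R) :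
    List S → FreeAlgebra R S × FreeAlgebra R S
  | [] => (0, 1)
  | a :: M => ((tsL R q M).2 - FreeAlgebra.ι R a * (tsL R q M).1,
      FreeAlgebra.ι R a * (tsL R q M).2 - q • (tsL R q M).1)

section lists
variable (R : Type*) [CommRing R] {S : Type*} (q : R)

lemma tsL_swap_fst (x y : S) (l : List S) :
    (tsL R q (y :: x :: l)).1 + (tsL R q (x :: y :: l)).1 =
      (FreeAlgebra.ι R x * FreeAlgebra.ι R y + FreeAlgebra.ι R y * FreeAlgebra.ι R x
        - 2 * algebraMap R _ q) * (tsL R q l).1 := by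
  simp only [tsL]
  noncomm_ring [Algebra.algebraMap_eq_smul_one]

lemma tsL_swap_snd (x y : S) (l : List S) :
    (tsL R q (y :: x :: l)).2 + (tsL R q (x :: y :: l)).2 =
      (FreeAlgebra.ι R x * FreeAlgebra.ι R y + FreeAlgebra.ι R y * FreeAlgebra.ι R x
        - 2 * algebraMap R _ q) * (tsL R q l).2 := by
  simp only [tsL]
  noncomm_ring [Algebra.algebraMap_eq_smul_one, smul_add, smul_sub, smul_neg, smul_smul,
    smul_comm q (-1 : ℤ)]
end lists

section perm
variable (R : Type*) [CommRing R] {S : Type*} (q : R)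

lemma tsL_perm {L L' : List S} (h : L.Perm L') (I : TwoSidedIdeal (FreeAlgebra R S))
    (hcom : ∀ r s : S, FreeAlgebra.ι R r * FreeAlgebra.ι R s
      + FreeAlgebra.ι R s * FreeAlgebra.ι R r - 2 * algebraMap R _ q ∈ I) :
    ((tsL R q L).1 + (tsL R q L').1 ∈ I ∧ (tsL R q L).2 + (tsL R q L').2 ∈ I)
    ∨ ((tsL R q L).1 - (tsL R q L').1 ∈ I ∧ (tsL R q L).2 - (tsL R q L').2 ∈ I) := by
  induction h with
  | nil =>
    right
    simpa using ⟨I.zero_mem, I.zero_mem⟩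
  | cons x h ih =>
    rename_i l₁ l₂
    rcases ih with ⟨h1, h2⟩ | ⟨h1, h2⟩
    · left
      constructor
      · have : (tsL R q (x :: l₁)).1 + (tsL R q (x :: l₂)).1 =
            ((tsL R q l₁).2 + (tsL R q l₂).2)
              - FreeAlgebra.ι R x * ((tsL R q l₁).1 + (tsL R q l₂).1) := by
          simp only [tsL]; noncomm_ring
        rw [this]
        exact I.sub_mem h2 (I.mul_mem_left _ _ h1)
      · have : (tsL R q (x :: l₁)).2 + (tsL R q (x :: l₂)).2 =
            FreeAlgebra.ι R x * ((tsL R q l₁).2 + (tsL R q l₂).2)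
              - q • ((tsL R q l₁).1 + (tsL R q l₂).1) := by
          simp only [tsL]; noncomm_ring [smul_add, smul_sub, smul_neg, smul_smul, smul_comm q (-1 : ℤ)]
        rw [this]
        refine I.sub_mem (I.mul_mem_left _ _ h2) ?_
        rw [Algebra.smul_def]
        exact I.mul_mem_left _ _ h1
    · right
      constructor
      · have : (tsL R q (x :: l₁)).1 - (tsL R q (x :: l₂)).1 =
            ((tsL R q l₁).2 - (tsL R q l₂).2)
              - FreeAlgebra.ι R x * ((tsL R q l₁).1 - (tsL R q l₂).1) := by
          simp only [tsL]; noncomm_ring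
        rw [this]
        exact I.sub_mem h2 (I.mul_mem_left _ _ h1)
      · have : (tsL R q (x :: l₁)).2 - (tsL R q (x :: l₂)).2 =
            FreeAlgebra.ι R x * ((tsL R q l₁).2 - (tsL R q l₂).2)
              - q • ((tsL R q l₁).1 - (tsL R q l₂).1) := by
          simp only [tsL]; noncomm_ring [smul_add, smul_sub, smul_neg, smul_smul, smul_comm q (-1 : ℤ)]
        rw [this]
        refine I.sub_mem (I.mul_mem_left _ _ h2) ?_
        rw [Algebra.smul_def]
        exact I.mul_mem_left _ _ h1
  | swap x y l =>
    left
    constructor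
    · rw [tsL_swap_fst]
      exact I.mul_mem_right _ _ (hcom x y)
    · rw [tsL_swap_snd]
      exact I.mul_mem_right _ _ (hcom x y)
  | trans h1 h2 ih1 ih2 =>
    rcases ih1 with ⟨a1, a2⟩ | ⟨a1, a2⟩ <;> rcases ih2 with ⟨b1, b2⟩ | ⟨b1, b2⟩
    · right
      refine ⟨?_, ?_⟩
      · have := I.sub_mem a1 b1; convert this using 1; abel
      · have := I.sub_mem a2 b2; convert this using 1; abel
    · left
      refine ⟨?_, ?_⟩
      · have := I.sub_mem a1 b1; convert this using 1; abel
      · have := I.sub_mem a2 b2; convert this using 1; abel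
    · left
      refine ⟨?_, ?_⟩
      · have := I.add_mem a1 b1; convert this using 1; abel
      · have := I.add_mem a2 b2; convert this using 1; abel
    · right
      refine ⟨?_, ?_⟩
      · have := I.add_mem a1 b1; convert this using 1; abel
      · have := I.add_mem a2 b2; convert this using 1; abel
end perm

section finsetlem
variable {S : Type*} (lo : LinearOrder S)

lemma sdiff_insert_not_mem (a : S) (K I : Finset S) (hI : I ⊆ K) (haK : a ∉ K) :
    letI := lo
    (insert a K) \ I = insert a (K \ I) := by
  letI := lo
  exact Finset.insert_sdiff_of_notMem K (fun h => haK (hI h))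

lemma sdiff_insert_insert (a : S) (K I : Finset S) (hI : I ⊆ K) (haK : a ∉ K) :
    letI := lo
    (insert a K) \ (insert a I) = K \ I := by
  letI := lo
  rw [Finset.insert_sdiff_insert]
  ext b
  simp only [Finset.mem_sdiff, Finset.mem_insert, not_or]
  constructor
  · rintro ⟨hbK, -, hbI⟩
    exact ⟨hbK, hbI⟩
  · rintro ⟨hbK, hbI⟩
    exact ⟨hbK, fun h => haK (h ▸ hbK), hbI⟩

lemma ellJO_insert_not_mem (a : S) (K I : Finset S) (hI : I ⊆ K) (haK : a ∉ K)
    (hlt : ∀ b ∈ K, lo.lt a b) :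
    ellJO lo (insert a K) I = ellJO lo K I + I.card := by
  letI := lo
  unfold ellJO
  have key : ∀ i ∈ I, (((insert a K) \ I).filter (· < i)).card
      = ((K \ I).filter (· < i)).card + 1 := by
    intro i hi
    rw [sdiff_insert_not_mem lo a K I hI haK, Finset.filter_insert,
      if_pos (hlt i (hI hi)), Finset.card_insert_of_notMem]
    simp [haK]
  rw [Finset.sum_congr rfl key, Finset.sum_add_distrib, Finset.sum_const, smul_eq_mul, mul_one]

lemma ellJO_insert_insert (a : S) (K I : Finset S) (hI : I ⊆ K) (haK : a ∉ K)
    (hlt : ∀ b ∈ K, lo.lt a b) :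
    ellJO lo (insert a K) (insert a I) = ellJO lo K I := by
  letI := lo
  have haI : a ∉ I := fun h => haK (hI h)
  unfold ellJO
  rw [Finset.sum_insert haI, sdiff_insert_insert lo a K I hI haK]
  have h0 : ((K \ I).filter (· < a)).card = 0 := by
    rw [Finset.card_eq_zero, Finset.filter_eq_empty_iff]
    intro b hb
    exact not_lt_of_gt (hlt b (Finset.mem_sdiff.1 hb).1)
  rw [h0, zero_add]

lemma tMonO_insert (R : Type*) [CommRing R] (a : S) (K : Finset S) (haK : a ∉ K)
    (hlt : ∀ b ∈ K, lo.lt a b) :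
    tMonO R lo (insert a K) = FreeAlgebra.ι R a * tMonO R lo K := by
  letI := lo
  unfold tMonO
  rw [Finset.sort_insert (· ≤ ·) (fun b hb => (hlt b hb).le) haK, List.map_cons, List.prod_cons]
end finsetlem

section recur
variable (R : Type*) [CommRing R] {S : Type*} (q : R)

lemma tauMinusO_empty (lo : LinearOrder S) : tauMinusO R lo q ∅ = 0 := by
  simp [tauMinusO, Finset.filter_singleton]

lemma sigO_empty (lo : LinearOrder S) : sigO R lo q ∅ = 1 := by
  simp [sigO, ellJO, tMonO, Finset.filter_singleton]

lemma tauMinusO_insert (lo : LinearOrder S) (a : S) (K : Finset S) (haK : a ∉ K)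
    (hlt : ∀ b ∈ K, lo.lt a b) :
    tauMinusO R lo q (insert a K) =
      sigO R lo q K - FreeAlgebra.ι R a * tauMinusO R lo q K := by
  letI := lo
  have hsub : ∀ I : Finset S, I ⊆ K → a ∉ I := fun I hI h => haK (hI h)
  unfold tauMinusO sigO
  rw [Finset.sum_filter, Finset.sum_filter, Finset.sum_filter, Finset.sum_powerset_insert haK]
  have e1 : ∀ I ∈ K.powerset,
      (if ¬2 ∣ I.card then
        ((-1:R)^ellJO lo (insert a K) I * (-q)^((I.card-1)/2)) • tMonO R lo ((insert a K)\I)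
       else 0)
      = -(FreeAlgebra.ι R a *
          (if ¬2 ∣ I.card then
            ((-1:R)^ellJO lo K I * (-q)^((I.card-1)/2)) • tMonO R lo (K\I) else 0)) := by
    intro I hIp
    have hI : I ⊆ K := Finset.mem_powerset.1 hIp
    by_cases h : 2 ∣ I.card
    · simp [h]
    · have hodd : Odd I.card := Nat.not_even_iff_odd.1 fun he => h he.two_dvd
      rw [if_pos h, if_pos h, ellJO_insert_not_mem lo a K I hI haK hlt,
        sdiff_insert_not_mem lo a K I hI haK,
        tMonO_insert lo R a (K \ I) (fun hmem => haK (Finset.mem_sdiff.1 hmem).1)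
          (fun b hb => hlt b (Finset.mem_sdiff.1 hb).1),
        mul_smul_comm, ← neg_smul, pow_add, hodd.neg_one_pow]
      congr 1
      ring
  have e2 : ∀ I ∈ K.powerset,
      (if ¬2 ∣ (insert a I).card then
        ((-1:R)^ellJO lo (insert a K) (insert a I) * (-q)^(((insert a I).card - 1)/2)) •
          tMonO R lo ((insert a K)\(insert a I))
       else 0)
      = (if 2 ∣ I.card then
          ((-1:R)^ellJO lo K I * (-q)^(I.card/2)) • tMonO R lo (K\I) else 0) := by
    intro I hIp
    have hI : I ⊆ K := Finset.mem_powerset.1 hIp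
    rw [Finset.card_insert_of_notMem (hsub I hI), ellJO_insert_insert lo a K I hI haK hlt,
      sdiff_insert_insert lo a K I hI haK]
    have hiff : (¬2 ∣ I.card + 1) ↔ 2 ∣ I.card := by omega
    by_cases h : 2 ∣ I.card
    · rw [if_pos (hiff.2 h), if_pos h, Nat.add_sub_cancel]
    · rw [if_neg (fun hh => h (hiff.1 hh)), if_neg h]
  rw [Finset.sum_congr rfl e1, Finset.sum_congr rfl e2, Finset.sum_neg_distrib, ← Finset.mul_sum]
  abel

lemma sigO_insert (lo : LinearOrder S) (a : S) (K : Finset S) (haK : a ∉ K)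
    (hlt : ∀ b ∈ K, lo.lt a b) :
    sigO R lo q (insert a K) =
      FreeAlgebra.ι R a * sigO R lo q K - q • tauMinusO R lo q K := by
  letI := lo
  have hsub : ∀ I : Finset S, I ⊆ K → a ∉ I := fun I hI h => haK (hI h)
  unfold tauMinusO sigO
  rw [Finset.sum_filter, Finset.sum_filter, Finset.sum_filter, Finset.sum_powerset_insert haK]
  have e1 : ∀ I ∈ K.powerset,
      (if 2 ∣ I.card then
        ((-1:R)^ellJO lo (insert a K) I * (-q)^(I.card/2)) • tMonO R lo ((insert a K)\I)
       else 0)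
      = FreeAlgebra.ι R a *
          (if 2 ∣ I.card then
            ((-1:R)^ellJO lo K I * (-q)^(I.card/2)) • tMonO R lo (K\I) else 0) := by
    intro I hIp
    have hI : I ⊆ K := Finset.mem_powerset.1 hIp
    by_cases h : 2 ∣ I.card
    · have heven : Even I.card := by obtain ⟨c, hc⟩ := h; exact ⟨c, by omega⟩
      rw [if_pos h, if_pos h, ellJO_insert_not_mem lo a K I hI haK hlt,
        sdiff_insert_not_mem lo a K I hI haK,
        tMonO_insert lo R a (K \ I) (fun hmem => haK (Finset.mem_sdiff.1 hmem).1)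
          (fun b hb => hlt b (Finset.mem_sdiff.1 hb).1),
        mul_smul_comm, pow_add, heven.neg_one_pow]
      congr 1
      ring
    · simp [h]
  have e2 : ∀ I ∈ K.powerset,
      (if 2 ∣ (insert a I).card then
        ((-1:R)^ellJO lo (insert a K) (insert a I) * (-q)^((insert a I).card/2)) •
          tMonO R lo ((insert a K)\(insert a I))
       else 0)
      = -(q • (if ¬2 ∣ I.card then
          ((-1:R)^ellJO lo K I * (-q)^((I.card - 1)/2)) • tMonO R lo (K\I) else 0)) := by
    intro I hIp
    have hI : I ⊆ K := Finset.mem_powerset.1 hIp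
    rw [Finset.card_insert_of_notMem (hsub I hI), ellJO_insert_insert lo a K I hI haK hlt,
      sdiff_insert_insert lo a K I hI haK]
    have hiff : (2 ∣ I.card + 1) ↔ ¬2 ∣ I.card := by omega
    by_cases h : 2 ∣ I.card
    · rw [if_neg (fun hh => (hiff.1 hh) h), if_neg (fun hh => hh h)]
      simp
    · have hdiv : (I.card + 1) / 2 = (I.card - 1) / 2 + 1 := by omega
      rw [if_pos (hiff.2 h), if_pos h, hdiv, smul_smul, ← neg_smul, pow_succ]
      congr 1
      ring
  rw [Finset.sum_congr rfl e1, Finset.sum_congr rfl e2, Finset.sum_neg_distrib, ← Finset.mul_sum,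
    ← Finset.smul_sum]
  abel
end recur

section bridge
variable (R : Type*) [CommRing R] {S : Type*} (q : R)

lemma sortL_empty (lo : LinearOrder S) : sortL lo (∅ : Finset S) = [] := by
  letI := lo
  simp [sortL]

lemma sortL_insert (lo : LinearOrder S) (a : S) (K : Finset S) (haK : a ∉ K)
    (hlt : ∀ b ∈ K, lo.lt a b) :
    sortL lo (insert a K) = a :: sortL lo K := by
  letI := lo
  unfold sortL
  exact Finset.sort_insert (· ≤ ·) (fun b hb => (hlt b hb).le) haK

lemma tau_eq_tsL (lo : LinearOrder S) (J : Finset S) :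
    tauMinusO R lo q J = (tsL R q (sortL lo J)).1
      ∧ sigO R lo q J = (tsL R q (sortL lo J)).2 := by
  induction J using Finset.strongInduction with
  | _ J ih =>
    rcases J.eq_empty_or_nonempty with rfl | hJ
    · rw [sortL_empty]
      exact ⟨by rw [tauMinusO_empty]; rfl, by rw [sigO_empty]; rfl⟩
    · letI := lo
      have hmem : J.min' hJ ∈ J := J.min'_mem hJ
      have hins : insert (J.min' hJ) (J.erase (J.min' hJ)) = J := Finset.insert_erase hmem
      have haK : J.min' hJ ∉ J.erase (J.min' hJ) := Finset.notMem_erase _ _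
      have hlt : ∀ b ∈ J.erase (J.min' hJ), lo.lt (J.min' hJ) b := fun b hb =>
        Finset.min'_lt_of_mem_erase_min' (s := J) (H := hJ) hb
      obtain ⟨ih1, ih2⟩ := ih _ (Finset.erase_ssubset hmem)
      constructor
      · rw [← hins, sortL_insert lo _ _ haK hlt,
          tauMinusO_insert R q lo _ _ haK hlt, ih1, ih2]
        simp [tsL]
      · rw [← hins, sortL_insert lo _ _ haK hlt,
          sigO_insert R q lo _ _ haK hlt, ih1, ih2]
        simp [tsL]
end bridge

/-- Generators of the ideal `I_q^<(𝔐)`, for an explicitly given total order. -/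
def gensO (R : Type*) [CommRing R] {S : Type*} (lo : LinearOrder S) (q : R)
    (M : Set (Finset S)) : Set (FreeAlgebra R S) :=
  (Set.range fun s : S => FreeAlgebra.ι R s ^ 2 - algebraMap R _ q) ∪
  {x | ∃ r s : S, lo.lt s r ∧
      x = FreeAlgebra.ι R r * FreeAlgebra.ι R s + FreeAlgebra.ι R s * FreeAlgebra.ι R r
        - 2 * algebraMap R _ q} ∪
  {x | ∃ J ∈ M, x = tauMinusO R lo q J}

/-- The two-sided ideal `I_q^<(𝔐)`, for an explicitly given total order. -/
noncomputable def IqO (R : Type*) [CommRing R] {S : Type*} (lo : LinearOrder S) (q : R)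
    (M : Set (Finset S)) : TwoSidedIdeal (FreeAlgebra R S) :=
  TwoSidedIdeal.span (gensO R lo q M)

section final
variable {S : Type*} {R : Type*} [CommRing R]

lemma IqO_le (q : R) (M : Set (Finset S)) (lo₁ lo₂ : LinearOrder S) :
    IqO R lo₂ q M ≤ IqO R lo₁ q M := by
  have hcom : ∀ r s : S, FreeAlgebra.ι R r * FreeAlgebra.ι R s
      + FreeAlgebra.ι R s * FreeAlgebra.ι R r - 2 * algebraMap R (FreeAlgebra R S) q
      ∈ IqO R lo₁ q M := by
    intro r s
    letI := lo₁
    rcases lt_trichotomy s r with h | rfl | h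
    · exact TwoSidedIdeal.subset_span (Or.inl (Or.inr ⟨r, s, h, rfl⟩))
    · have hg : FreeAlgebra.ι R s ^ 2 - algebraMap R (FreeAlgebra R S) q ∈ IqO R lo₁ q M :=
        TwoSidedIdeal.subset_span (Or.inl (Or.inl ⟨s, rfl⟩))
      have h2 := (IqO R lo₁ q M).mul_mem_left 2 _ hg
      convert h2 using 1
      noncomm_ring
    · have hmem : FreeAlgebra.ι R s * FreeAlgebra.ι R r + FreeAlgebra.ι R r * FreeAlgebra.ι R s
          - 2 * algebraMap R (FreeAlgebra R S) q ∈ IqO R lo₁ q M :=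
        TwoSidedIdeal.subset_span (Or.inl (Or.inr ⟨s, r, h, rfl⟩))
      convert hmem using 1
      abel
  intro x hx
  rw [IqO, TwoSidedIdeal.mem_span_iff] at hx
  apply hx
  intro y hy
  simp only [gensO, Set.mem_union, Set.mem_setOf_eq, Set.mem_range] at hy
  rcases hy with (⟨s, rfl⟩ | ⟨r, s, hrs, rfl⟩) | ⟨J, hJ, rfl⟩
  · exact TwoSidedIdeal.subset_span (Or.inl (Or.inl ⟨s, rfl⟩))
  · exact hcom r s
  · have h1 : tauMinusO R lo₁ q J ∈ IqO R lo₁ q M :=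
      TwoSidedIdeal.subset_span (Or.inr ⟨J, hJ, rfl⟩)
    have hperm : (sortL lo₂ J).Perm (sortL lo₁ J) := by
      have p2 : (sortL lo₂ J).Perm J.toList := by
        letI := lo₂; exact Finset.sort_perm_toList _ _
      have p1 : (sortL lo₁ J).Perm J.toList := by
        letI := lo₁; exact Finset.sort_perm_toList _ _
      exact p2.trans p1.symm
    have key := tsL_perm R q hperm (IqO R lo₁ q M) hcom
    rw [(tau_eq_tsL R q lo₂ J).1]
    rw [(tau_eq_tsL R q lo₁ J).1] at h1
    show (tsL R q (sortL lo₂ J)).1 ∈ IqO R lo₁ q M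
    rcases key with ⟨k1, -⟩ | ⟨k1, -⟩
    · have hs := (IqO R lo₁ q M).sub_mem k1 h1
      convert hs using 1
      abel
    · have hs := (IqO R lo₁ q M).add_mem k1 h1
      convert hs using 1
      abel
end final

theorem stmt13 {S : Type*} [Fintype S] {R : Type*} [CommRing R] (q : R)
    (M : Set (Finset S)) (lo₁ lo₂ : LinearOrder S) :
    IqO R lo₁ q M = IqO R lo₂ q M :=
  le_antisymm (IqO_le q M lo₂ lo₁) (IqO_le q M lo₁ lo₂)
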